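/- Let a₁, a₂, b₁, b₂ > 0 be real numbers and let A = (0,a₁)×(0,a₂), B = (0,b₁)×(0,b₂) and Q = (0,1)². Then there exist finite sets T, S ⊆ ℝ² such that χ_Q(x) = ∑_{t∈T} χ_{A}(x−t) + ∑_{s∈S} χ_{B}(x−s) for almost every x ∈ ℝ² (i.e. Q can be tiled by translates of the two bricks A and B) if and only if at least one of the following holds: (i) 1/a₁ ∈ ℤ and 1/a₂ ∈ ℤ; (ii) 1/b₁ ∈ ℤ and 1/b₂ ∈ ℤ; (iii) 1/a₁ ∈ ℤ and 1/b₁ ∈ ℤ and there exist nonnegative integers k, l with k·a₂ + l·b₂ = 1; (iv) 1/a₂ ∈ ℤ and 1/b₂ ∈ ℤ and there exist nonnegative integers k, l with k·a₁ + l·b₁ = 1. Equivalently: a tiling exists if and only if Q can be cut by a horizontal or vertical line into two rectangles (one possibly empty), each of which is tiled by translates of bricks of a single type. -/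

import Mathlib

open MeasureTheory Set


section BowerMichaelAux

/-- translate an interval indicator -/
lemma bm_indT {M : Type*} [Zero M] (r : M) (a c x : ℝ) :
    (Ioo 0 a).indicator (fun _ => r) (x - c) = (Ioo c (c+a)).indicator (fun _ => r) x := by
  have h : x - c ∈ Ioo 0 a ↔ x ∈ Ioo c (c + a) := by
    simp only [mem_Ioo, sub_pos, sub_lt_iff_lt_add]
    constructor <;> rintro ⟨h1, h2⟩ <;> constructor <;> linarith
  simp only [Set.indicator_apply]
  exact if_congr h rfl rfl

/-- product-set indicator factors -/
lemma bm_indP {M : Type*} [MulZeroOneClass M] (s t : Set ℝ) (p : ℝ × ℝ) :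
    (s ×ˢ t).indicator (fun _ => (1:M)) p
      = s.indicator (fun _ => (1:M)) p.1 * t.indicator (fun _ => (1:M)) p.2 := by
  by_cases h1 : p.1 ∈ s <;> by_cases h2 : p.2 ∈ t <;>
    simp [Set.indicator_apply, Set.mem_prod, h1, h2]

/-- 1D grid tiling, pointwise off grid points -/
lemma bm_grid1 (a : ℝ) (ha : 0 < a) (m : ℕ) (c : ℝ) (x : ℝ)
    (hx : ∀ i : ℕ, i ≤ m → x ≠ c + i*a) :
    (Ioo c (c + m*a)).indicator (fun _ => (1:ℝ)) x
      = ∑ i ∈ Finset.range m, (Ioo 0 a).indicator (fun _ => (1:ℝ)) (x - (c + i*a)) := by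
  induction m with
  | zero => simp
  | succ m ih =>
    rw [Finset.sum_range_succ, ← ih (fun i hi => hx i (le_trans hi (Nat.le_succ m))),
        bm_indT]
    have hma : (0:ℝ) ≤ (m:ℝ)*a := by positivity
    have hm : x ≠ c + m*a := hx m (Nat.le_succ m)
    have key : c + ((m:ℕ)+1 : ℕ)*a = (c + m*a) + a := by push_cast; ring
    rw [key]
    simp only [Set.indicator_apply, mem_Ioo]
    rcases lt_trichotomy x (c + m*a) with h | h | h
    · rw [if_neg (show ¬(c + (m:ℝ)*a < x ∧ x < c + (m:ℝ)*a + a) by rintro ⟨h1, h2⟩; linarith),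
        add_zero]
      exact if_congr (by constructor <;> rintro ⟨h1, h2⟩ <;> exact ⟨h1, by linarith⟩) rfl rfl
    · exact absurd h hm
    · rw [if_neg (show ¬(c < x ∧ x < c + (m:ℝ)*a) by rintro ⟨h1, h2⟩; linarith), zero_add]
      exact if_congr (by constructor <;> rintro ⟨h1, h2⟩ <;> exact ⟨by linarith, by linarith⟩)
        rfl rfl

/-- 1D grid tiling, a.e. -/
lemma bm_grid1_ae (a : ℝ) (ha : 0 < a) (m : ℕ) (c : ℝ) :
    ∀ᵐ x : ℝ, (Ioo c (c + m*a)).indicator (fun _ => (1:ℝ)) x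
      = ∑ i ∈ Finset.range m, (Ioo 0 a).indicator (fun _ => (1:ℝ)) (x - (c + i*a)) := by
  have hfin : ({x : ℝ | ∃ i : ℕ, i ≤ m ∧ x = c + i*a}).Finite := by
    apply Set.Finite.subset (Set.Finite.image (fun i : ℕ => c + i*a) (Set.finite_Iic m))
    rintro x ⟨i, hi, rfl⟩
    exact ⟨i, hi, rfl⟩
  have h0 : volume {x : ℝ | ∃ i : ℕ, i ≤ m ∧ x = c + i*a} = 0 :=
    hfin.measure_zero volume
  rw [show (∀ᵐ x : ℝ, (Ioo c (c + m*a)).indicator (fun _ => (1:ℝ)) x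
      = ∑ i ∈ Finset.range m, (Ioo 0 a).indicator (fun _ => (1:ℝ)) (x - (c + i*a))) ↔ _
    from ae_iff]
  apply measure_mono_null _ h0
  intro x hx
  simp only [mem_setOf_eq] at hx ⊢
  by_contra hc
  push_neg at hc
  exact hx (bm_grid1 a ha m c x (fun i hi hne => hc i hi hne))

/-- lift a.e. statements to the product -/
lemma bm_ae_fst {P : ℝ → Prop} (h : ∀ᵐ x : ℝ, P x) : ∀ᵐ p : ℝ × ℝ, P p.1 := by
  rw [ae_iff] at h ⊢
  obtain ⟨t, hsub, hmeas, ht⟩ := exists_measurable_superset_of_null h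
  apply measure_mono_null (t := t ×ˢ (univ : Set ℝ))
  · intro p hp; exact ⟨hsub hp, trivial⟩
  · rw [Measure.volume_eq_prod, Measure.prod_prod, ht, zero_mul]

lemma bm_ae_snd {P : ℝ → Prop} (h : ∀ᵐ x : ℝ, P x) : ∀ᵐ p : ℝ × ℝ, P p.2 := by
  rw [ae_iff] at h ⊢
  obtain ⟨t, hsub, hmeas, ht⟩ := exists_measurable_superset_of_null h
  apply measure_mono_null (t := (univ : Set ℝ) ×ˢ t)
  · intro p hp; exact ⟨trivial, hsub hp⟩
  · rw [Measure.volume_eq_prod, Measure.prod_prod, ht, mul_zero]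

end BowerMichaelAux
section Part2
open Finset in
/-- 2D grid tiling of a rectangle by one brick, a.e. -/
lemma bm_strip (a b : ℝ) (ha : 0 < a) (hb : 0 < b) (m n : ℕ) (c d : ℝ) :
    ∃ T : Finset (ℝ × ℝ), ∀ᵐ p : ℝ × ℝ,
      (Ioo c (c + m*a) ×ˢ Ioo d (d + n*b)).indicator (fun _ => (1:ℝ)) p
        = ∑ t ∈ T, (Ioo 0 a ×ˢ Ioo 0 b).indicator (fun _ => (1:ℝ)) (p - t) := by
  classical
  refine ⟨(Finset.range m ×ˢ Finset.range n).image
    (fun q : ℕ × ℕ => ((c + q.1*a : ℝ), (d + q.2*b : ℝ))), ?_⟩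
  filter_upwards [bm_ae_fst (bm_grid1_ae a ha m c), bm_ae_snd (bm_grid1_ae b hb n d)]
    with p h1 h2
  rw [bm_indP, h1, h2, Finset.sum_mul_sum, Finset.sum_image]
  · rw [← Finset.sum_product']
    apply Finset.sum_congr rfl
    rintro ⟨i, j⟩ hij
    rw [bm_indP]
    simp [Prod.fst_sub, Prod.snd_sub]
  · rintro ⟨i, j⟩ hij ⟨i', j'⟩ hij' heq
    simp only [Prod.mk.injEq, add_right_injective] at heq
    obtain ⟨e1, e2⟩ := heq
    have : (i:ℝ) = i' := by
      have := add_left_cancel e1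
      exact mul_right_cancel₀ (ne_of_gt ha) this
    have h2 : (j:ℝ) = j' := by
      have := add_left_cancel e2
      exact mul_right_cancel₀ (ne_of_gt hb) this
    exact Prod.ext (Nat.cast_injective this) (Nat.cast_injective h2)

/-- split the unit square by the horizontal line y = r -/
lemma bm_split_y (r : ℝ) (h0 : 0 ≤ r) (h1 : r ≤ 1) :
    ∀ᵐ p : ℝ × ℝ, (Ioo (0:ℝ) 1 ×ˢ Ioo (0:ℝ) 1).indicator (fun _ => (1:ℝ)) p
      = (Ioo (0:ℝ) 1 ×ˢ Ioo 0 r).indicator (fun _ => (1:ℝ)) p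
        + (Ioo (0:ℝ) 1 ×ˢ Ioo r 1).indicator (fun _ => (1:ℝ)) p := by
  have hr : ∀ᵐ y : ℝ, y ≠ r := by
    rw [ae_iff]
    apply measure_mono_null (t := {r})
    · intro y hy; simpa using not_not.mp (by simpa using hy)
    · exact measure_singleton r
  filter_upwards [bm_ae_snd hr] with p hp
  rw [bm_indP, bm_indP, bm_indP, ← mul_add]
  congr 1
  simp only [Set.indicator_apply, mem_Ioo]
  rcases lt_trichotomy p.2 r with h | h | h
  · rw [if_neg (show ¬(r < p.2 ∧ p.2 < 1) by rintro ⟨u, v⟩; linarith), add_zero]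
    exact if_congr (by constructor <;> rintro ⟨u, v⟩ <;> exact ⟨u, by linarith⟩) rfl rfl
  · exact absurd h hp
  · rw [if_neg (show ¬(0 < p.2 ∧ p.2 < r) by rintro ⟨u, v⟩; linarith), zero_add]
    exact if_congr (by constructor <;> rintro ⟨u, v⟩ <;> exact ⟨by linarith, v⟩) rfl rfl

/-- split the unit square by the vertical line x = r -/
lemma bm_split_x (r : ℝ) (h0 : 0 ≤ r) (h1 : r ≤ 1) :
    ∀ᵐ p : ℝ × ℝ, (Ioo (0:ℝ) 1 ×ˢ Ioo (0:ℝ) 1).indicator (fun _ => (1:ℝ)) p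
      = (Ioo (0:ℝ) r ×ˢ Ioo (0:ℝ) 1).indicator (fun _ => (1:ℝ)) p
        + (Ioo r 1 ×ˢ Ioo (0:ℝ) 1).indicator (fun _ => (1:ℝ)) p := by
  have hr : ∀ᵐ x : ℝ, x ≠ r := by
    rw [ae_iff]
    apply measure_mono_null (t := {r})
    · intro y hy; simpa using not_not.mp (by simpa using hy)
    · exact measure_singleton r
  filter_upwards [bm_ae_fst hr] with p hp
  rw [bm_indP, bm_indP, bm_indP, ← add_mul]
  congr 1
  simp only [Set.indicator_apply, mem_Ioo]
  rcases lt_trichotomy p.1 r with h | h | h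
  · rw [if_neg (show ¬(r < p.1 ∧ p.1 < 1) by rintro ⟨u, v⟩; linarith), add_zero]
    exact if_congr (by constructor <;> rintro ⟨u, v⟩ <;> exact ⟨u, by linarith⟩) rfl rfl
  · exact absurd h hp
  · rw [if_neg (show ¬(0 < p.1 ∧ p.1 < r) by rintro ⟨u, v⟩; linarith), zero_add]
    exact if_congr (by constructor <;> rintro ⟨u, v⟩ <;> exact ⟨by linarith, v⟩) rfl rfl
end Part2
section Part3

lemma bm_nat_inv (a : ℝ) (ha : 0 < a) (h : ∃ m : ℤ, 1/a = m) :
    ∃ M : ℕ, (M:ℝ) * a = 1 := by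
  obtain ⟨m, hm⟩ := h
  have hmpos : 0 < m := by
    have h' : (0:ℝ) < (m:ℝ) := by rw [← hm]; positivity
    exact_mod_cast h'
  refine ⟨m.toNat, ?_⟩
  have hc : ((m.toNat : ℕ) : ℝ) = (m : ℝ) := by
    exact_mod_cast congrArg (fun z : ℤ => (z : ℝ)) (Int.toNat_of_nonneg hmpos.le)
  rw [hc, ← hm]
  field_simp

lemma bm_backward (a₁ a₂ b₁ b₂ : ℝ) (ha₁ : 0 < a₁) (ha₂ : 0 < a₂)
    (hb₁ : 0 < b₁) (hb₂ : 0 < b₂)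
    (H : ((∃ m : ℤ, 1 / a₁ = (m : ℝ)) ∧ (∃ m : ℤ, 1 / a₂ = (m : ℝ))) ∨
     ((∃ m : ℤ, 1 / b₁ = (m : ℝ)) ∧ (∃ m : ℤ, 1 / b₂ = (m : ℝ))) ∨
     ((∃ m : ℤ, 1 / a₁ = (m : ℝ)) ∧ (∃ m : ℤ, 1 / b₁ = (m : ℝ)) ∧
       ∃ k l : ℕ, (k : ℝ) * a₂ + (l : ℝ) * b₂ = 1) ∨
     ((∃ m : ℤ, 1 / a₂ = (m : ℝ)) ∧ (∃ m : ℤ, 1 / b₂ = (m : ℝ)) ∧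
       ∃ k l : ℕ, (k : ℝ) * a₁ + (l : ℝ) * b₁ = 1)) :
    (∃ T S : Finset (ℝ × ℝ),
      ∀ᵐ x ∂(volume : Measure (ℝ × ℝ)),
        (Ioo (0:ℝ) 1 ×ˢ Ioo (0:ℝ) 1).indicator (fun _ => (1:ℝ)) x =
          (∑ t ∈ T, (Ioo 0 a₁ ×ˢ Ioo 0 a₂).indicator (fun _ => (1:ℝ)) (x - t)) +
          (∑ s ∈ S, (Ioo 0 b₁ ×ˢ Ioo 0 b₂).indicator (fun _ => (1:ℝ)) (x - s))) := by
  rcases H with ⟨h1, h2⟩ | ⟨h1, h2⟩ | ⟨h1, h2, k, l, hkl⟩ | ⟨h1, h2, k, l, hkl⟩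
  · obtain ⟨M1, hM1⟩ := bm_nat_inv a₁ ha₁ h1
    obtain ⟨M2, hM2⟩ := bm_nat_inv a₂ ha₂ h2
    obtain ⟨T, hT⟩ := bm_strip a₁ a₂ ha₁ ha₂ M1 M2 0 0
    rw [show (0:ℝ) + M1*a₁ = 1 by rw [hM1]; ring,
        show (0:ℝ) + M2*a₂ = 1 by rw [hM2]; ring] at hT
    refine ⟨T, ∅, ?_⟩
    filter_upwards [hT] with p hp
    simpa using hp
  · obtain ⟨M1, hM1⟩ := bm_nat_inv b₁ hb₁ h1
    obtain ⟨M2, hM2⟩ := bm_nat_inv b₂ hb₂ h2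
    obtain ⟨S, hS⟩ := bm_strip b₁ b₂ hb₁ hb₂ M1 M2 0 0
    rw [show (0:ℝ) + M1*b₁ = 1 by rw [hM1]; ring,
        show (0:ℝ) + M2*b₂ = 1 by rw [hM2]; ring] at hS
    refine ⟨∅, S, ?_⟩
    filter_upwards [hS] with p hp
    simpa using hp
  · -- horizontal cut at height k*a₂
    obtain ⟨Ma, hMa⟩ := bm_nat_inv a₁ ha₁ h1
    obtain ⟨Mb, hMb⟩ := bm_nat_inv b₁ hb₁ h2
    have hr0 : (0:ℝ) ≤ (k:ℝ)*a₂ := by positivity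
    have hlb : (0:ℝ) ≤ (l:ℝ)*b₂ := by positivity
    have hr1 : (k:ℝ)*a₂ ≤ 1 := by linarith
    obtain ⟨T, hT⟩ := bm_strip a₁ a₂ ha₁ ha₂ Ma k 0 0
    obtain ⟨S, hS⟩ := bm_strip b₁ b₂ hb₁ hb₂ Mb l 0 ((k:ℝ)*a₂)
    rw [show (0:ℝ) + Ma*a₁ = 1 by rw [hMa]; ring,
        show (0:ℝ) + (k:ℝ)*a₂ = (k:ℝ)*a₂ by ring] at hT
    rw [show (0:ℝ) + Mb*b₁ = 1 by rw [hMb]; ring,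
        show (k:ℝ)*a₂ + (l:ℝ)*b₂ = 1 from hkl] at hS
    refine ⟨T, S, ?_⟩
    filter_upwards [hT, hS, bm_split_y ((k:ℝ)*a₂) hr0 hr1] with p e1 e2 e3
    rw [e3, e1, e2]
  · -- vertical cut at x = k*a₁
    obtain ⟨Ma, hMa⟩ := bm_nat_inv a₂ ha₂ h1
    obtain ⟨Mb, hMb⟩ := bm_nat_inv b₂ hb₂ h2
    have hr0 : (0:ℝ) ≤ (k:ℝ)*a₁ := by positivity
    have hlb : (0:ℝ) ≤ (l:ℝ)*b₁ := by positivity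
    have hr1 : (k:ℝ)*a₁ ≤ 1 := by linarith
    obtain ⟨T, hT⟩ := bm_strip a₁ a₂ ha₁ ha₂ k Ma 0 0
    obtain ⟨S, hS⟩ := bm_strip b₁ b₂ hb₁ hb₂ l Mb ((k:ℝ)*a₁) 0
    rw [show (0:ℝ) + Ma*a₂ = 1 by rw [hMa]; ring,
        show (0:ℝ) + (k:ℝ)*a₁ = (k:ℝ)*a₁ by ring] at hT
    rw [show (0:ℝ) + Mb*b₂ = 1 by rw [hMb]; ring,
        show (k:ℝ)*a₁ + (l:ℝ)*b₁ = 1 from hkl] at hS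
    refine ⟨T, S, ?_⟩
    filter_upwards [hT, hS, bm_split_x ((k:ℝ)*a₁) hr0 hr1] with p e1 e2 e3
    rw [e3, e1, e2]
end Part3
section Part4

lemma bm_exists_slice {P : ℝ × ℝ → Prop} (h : ∀ᵐ p : ℝ × ℝ, P p) :
    ∃ x : ℝ, x ∈ Ioo (0:ℝ) 1 ∧ ∀ᵐ y : ℝ, P (x, y) := by
  rw [Measure.volume_eq_prod] at h
  have h2 := Measure.ae_ae_of_ae_prod h
  rw [ae_iff] at h2
  have hns : ¬ (Ioo (0:ℝ) 1 ⊆ {x | ¬ ∀ᵐ y : ℝ, P (x, y)}) := by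
    intro hsub
    have hz := measure_mono_null hsub h2
    rw [Real.volume_Ioo] at hz
    norm_num at hz
  obtain ⟨x, hx, hxn⟩ := Set.not_subset.mp hns
  exact ⟨x, hx, not_not.mp hxn⟩

lemma bm_int_ind (a c : ℝ) (ha : 0 ≤ a) :
    Integrable (fun y : ℝ => (Ioo 0 a).indicator (fun _ => (1:ℝ)) (y - c)) volume ∧
    ∫ y : ℝ, (Ioo 0 a).indicator (fun _ => (1:ℝ)) (y - c) = a := by
  have hI : Integrable ((Ioo (0:ℝ) a).indicator (fun _ => (1:ℝ))) volume := by
    refine (integrable_indicator_iff measurableSet_Ioo).2 ?_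
    refine integrableOn_const ?_
    rw [Real.volume_Ioo]
    exact ENNReal.ofReal_ne_top
  constructor
  · exact hI.comp_sub_right c
  · rw [integral_sub_right_eq_self ((Ioo (0:ℝ) a).indicator (fun _ => (1:ℝ))) c,
      integral_indicator_const (1:ℝ) measurableSet_Ioo, Real.volume_real_Ioo_of_le ha, sub_zero,
      smul_eq_mul, mul_one]

lemma bm_slice (a₁ a₂ b₁ b₂ : ℝ) (ha₁ : 0 < a₁) (ha₂ : 0 < a₂)
    (hb₁ : 0 < b₁) (hb₂ : 0 < b₂) (T S : Finset (ℝ × ℝ))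
    (h : ∀ᵐ x ∂(volume : Measure (ℝ × ℝ)),
        (Ioo (0:ℝ) 1 ×ˢ Ioo (0:ℝ) 1).indicator (fun _ => (1:ℝ)) x =
          (∑ t ∈ T, (Ioo 0 a₁ ×ˢ Ioo 0 a₂).indicator (fun _ => (1:ℝ)) (x - t)) +
          (∑ s ∈ S, (Ioo 0 b₁ ×ˢ Ioo 0 b₂).indicator (fun _ => (1:ℝ)) (x - s))) :
    ∃ k l : ℕ, (k:ℝ) * a₂ + (l:ℝ) * b₂ = 1 := by
  classical
  obtain ⟨x, hx, hy⟩ := bm_exists_slice h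
  have hy2 : ∀ᵐ y : ℝ, (Ioo (0:ℝ) 1).indicator (fun _ => (1:ℝ)) y
      = ((∑ t ∈ T, (Ioo 0 a₁).indicator (fun _ => (1:ℝ)) (x - t.1) *
          (Ioo 0 a₂).indicator (fun _ => (1:ℝ)) (y - t.2))
        + ∑ s ∈ S, (Ioo 0 b₁).indicator (fun _ => (1:ℝ)) (x - s.1) *
          (Ioo 0 b₂).indicator (fun _ => (1:ℝ)) (y - s.2)) := by
    filter_upwards [hy] with y e
    simp only [bm_indP, Prod.fst_sub, Prod.snd_sub] at e
    rw [Set.indicator_of_mem hx, one_mul] at e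
    exact e
  have hIA : ∀ t : ℝ × ℝ, Integrable (fun y : ℝ =>
      (Ioo 0 a₁).indicator (fun _ => (1:ℝ)) (x - t.1) *
      (Ioo 0 a₂).indicator (fun _ => (1:ℝ)) (y - t.2)) volume := fun t =>
    ((bm_int_ind a₂ t.2 ha₂.le).1).const_mul _
  have hIB : ∀ s : ℝ × ℝ, Integrable (fun y : ℝ =>
      (Ioo 0 b₁).indicator (fun _ => (1:ℝ)) (x - s.1) *
      (Ioo 0 b₂).indicator (fun _ => (1:ℝ)) (y - s.2)) volume := fun s =>
    ((bm_int_ind b₂ s.2 hb₂.le).1).const_mul _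
  have hint := integral_congr_ae hy2
  rw [integral_indicator_const (1:ℝ) measurableSet_Ioo, Real.volume_real_Ioo_of_le one_pos.le,
      sub_zero, smul_eq_mul, mul_one] at hint
  rw [integral_add (integrable_finset_sum T (fun t _ => hIA t))
      (integrable_finset_sum S (fun s _ => hIB s)),
      integral_finset_sum T (fun t _ => hIA t),
      integral_finset_sum S (fun s _ => hIB s)] at hint
  simp only [integral_const_mul] at hint
  have eA : ∀ t : ℝ × ℝ, ∫ y : ℝ, (Ioo 0 a₂).indicator (fun _ => (1:ℝ)) (y - t.2) = a₂ :=
    fun t => (bm_int_ind a₂ t.2 ha₂.le).2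
  have eB : ∀ s : ℝ × ℝ, ∫ y : ℝ, (Ioo 0 b₂).indicator (fun _ => (1:ℝ)) (y - s.2) = b₂ :=
    fun s => (bm_int_ind b₂ s.2 hb₂.le).2
  simp only [eA, eB] at hint
  refine ⟨(T.filter (fun t => x - t.1 ∈ Ioo 0 a₁)).card,
          (S.filter (fun s => x - s.1 ∈ Ioo 0 b₁)).card, ?_⟩
  have sA : (∑ t ∈ T, (Ioo 0 a₁).indicator (fun _ => (1:ℝ)) (x - t.1) * a₂)
      = ((T.filter (fun t => x - t.1 ∈ Ioo 0 a₁)).card : ℝ) * a₂ := by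
    rw [← Finset.sum_mul]
    congr 1
    simp only [Set.indicator_apply]
    exact Finset.sum_boole _ _
  have sB : (∑ s ∈ S, (Ioo 0 b₁).indicator (fun _ => (1:ℝ)) (x - s.1) * b₂)
      = ((S.filter (fun s => x - s.1 ∈ Ioo 0 b₁)).card : ℝ) * b₂ := by
    rw [← Finset.sum_mul]
    congr 1
    simp only [Set.indicator_apply]
    exact Finset.sum_boole _ _
  rw [sA, sB] at hint
  linarith [hint]

end Part4
section Part5

lemma bm_swap (a₁ a₂ b₁ b₂ : ℝ) (T S : Finset (ℝ × ℝ))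
    (h : ∀ᵐ x ∂(volume : Measure (ℝ × ℝ)),
        (Ioo (0:ℝ) 1 ×ˢ Ioo (0:ℝ) 1).indicator (fun _ => (1:ℝ)) x =
          (∑ t ∈ T, (Ioo 0 a₁ ×ˢ Ioo 0 a₂).indicator (fun _ => (1:ℝ)) (x - t)) +
          (∑ s ∈ S, (Ioo 0 b₁ ×ˢ Ioo 0 b₂).indicator (fun _ => (1:ℝ)) (x - s))) :
    ∃ T' S' : Finset (ℝ × ℝ),
      ∀ᵐ x ∂(volume : Measure (ℝ × ℝ)),
        (Ioo (0:ℝ) 1 ×ˢ Ioo (0:ℝ) 1).indicator (fun _ => (1:ℝ)) x =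
          (∑ t ∈ T', (Ioo 0 a₂ ×ˢ Ioo 0 a₁).indicator (fun _ => (1:ℝ)) (x - t)) +
          (∑ s ∈ S', (Ioo 0 b₂ ×ˢ Ioo 0 b₁).indicator (fun _ => (1:ℝ)) (x - s)) := by
  classical
  refine ⟨T.image Prod.swap, S.image Prod.swap, ?_⟩
  rw [Measure.volume_eq_prod] at h ⊢
  have hsw := (Measure.measurePreserving_swap (μ := (volume : Measure ℝ))
    (ν := (volume : Measure ℝ))).quasiMeasurePreserving.tendsto_ae
  have h2 := hsw.eventually h
  filter_upwards [h2] with p hp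
  have key : ∀ (c d : ℝ) (w : ℝ × ℝ),
      (Ioo 0 c ×ˢ Ioo 0 d).indicator (fun _ => (1:ℝ)) (Prod.swap p - w)
        = (Ioo 0 d ×ˢ Ioo 0 c).indicator (fun _ => (1:ℝ)) (p - Prod.swap w) := by
    intro c d w
    rw [bm_indP, bm_indP]
    simp only [Prod.fst_sub, Prod.snd_sub, Prod.fst_swap, Prod.snd_swap]
    ring
  have keyQ : (Ioo (0:ℝ) 1 ×ˢ Ioo (0:ℝ) 1).indicator (fun _ => (1:ℝ)) (Prod.swap p)
      = (Ioo (0:ℝ) 1 ×ˢ Ioo (0:ℝ) 1).indicator (fun _ => (1:ℝ)) p := by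
    rw [bm_indP, bm_indP]
    simp only [Prod.fst_swap, Prod.snd_swap]
    ring
  rw [keyQ] at hp
  rw [hp]
  congr 1
  · rw [Finset.sum_image (fun u _ v _ e => Prod.swap_injective e)]
    exact Finset.sum_congr rfl (fun t _ => key a₁ a₂ t)
  · rw [Finset.sum_image (fun u _ v _ e => Prod.swap_injective e)]
    exact Finset.sum_congr rfl (fun s _ => key b₁ b₂ s)

end Part5
section Part6

lemma bm_cne (u : ℝ) (hu : 0 < u) : ((2*Real.pi/u : ℝ) : ℂ) * Complex.I ≠ 0 :=
  mul_ne_zero (Complex.ofReal_ne_zero.mpr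
    (by positivity : (0:ℝ) < 2*Real.pi/u).ne') Complex.I_ne_zero

lemma bm_E1 (c : ℂ) (hc : c ≠ 0) (α β : ℝ) (hle : α ≤ β) :
    ∫ x : ℝ, (Ioo α β).indicator (fun x : ℝ => Complex.exp (c * x)) x
      = (Complex.exp (c * β) - Complex.exp (c * α)) / c := by
  rw [integral_indicator measurableSet_Ioo, ← integral_Ioc_eq_integral_Ioo,
      ← intervalIntegral.integral_of_le hle]
  exact integral_exp_mul_complex hc

lemma bm_E0 (u : ℝ) (hu : 0 < u) (α : ℝ) :
    ∫ x : ℝ, (Ioo α (α+u)).indicator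
      (fun x : ℝ => Complex.exp ((((2*Real.pi/u : ℝ) : ℂ) * Complex.I) * x)) x = 0 := by
  have hcne := bm_cne u hu
  rw [bm_E1 _ hcne α (α+u) (by linarith)]
  have hcu : (((2*Real.pi/u : ℝ) : ℂ) * Complex.I) * (u:ℂ) = 2 * (Real.pi:ℂ) * Complex.I := by
    have : ((2*Real.pi/u : ℝ) : ℂ) * (u:ℂ) = 2 * (Real.pi:ℂ) := by
      push_cast
      rw [div_mul_eq_mul_div, mul_div_assoc,
        div_self (Complex.ofReal_ne_zero.mpr hu.ne'), mul_one]
    calc (((2*Real.pi/u : ℝ) : ℂ) * Complex.I) * (u:ℂ)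
        = (((2*Real.pi/u : ℝ) : ℂ) * (u:ℂ)) * Complex.I := by ring
      _ = 2 * (Real.pi:ℂ) * Complex.I := by rw [this]
  have hexp : Complex.exp ((((2*Real.pi/u : ℝ) : ℂ) * Complex.I) * ((α+u : ℝ) : ℂ))
      = Complex.exp ((((2*Real.pi/u : ℝ) : ℂ) * Complex.I) * (α : ℂ)) := by
    have e1 : ((α+u : ℝ) : ℂ) = (α:ℂ) + (u:ℂ) := by push_cast; ring
    rw [e1, mul_add, Complex.exp_add, hcu]
    rw [show (2 : ℂ) * (Real.pi:ℂ) * Complex.I = 2 * ↑Real.pi * Complex.I by push_cast; ring,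
        Complex.exp_two_pi_mul_I, mul_one]
  rw [hexp, sub_self, zero_div]

lemma bm_extract (u : ℝ) (hu : 0 < u)
    (h0 : ∫ x : ℝ, (Ioo (0:ℝ) 1).indicator
      (fun x : ℝ => Complex.exp ((((2*Real.pi/u : ℝ) : ℂ) * Complex.I) * x)) x = 0) :
    ∃ m : ℤ, 1/u = (m:ℝ) := by
  have hcne := bm_cne u hu
  rw [bm_E1 _ hcne 0 1 zero_le_one, div_eq_zero_iff] at h0
  rcases h0 with h0 | h0
  · rw [sub_eq_zero] at h0
    have h1 : Complex.exp ((((2*Real.pi/u : ℝ) : ℂ) * Complex.I)) = 1 := by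
      have := h0
      simp only [Complex.ofReal_zero, mul_zero, Complex.exp_zero, Complex.ofReal_one,
        mul_one] at this
      exact this
    obtain ⟨n, hn⟩ := Complex.exp_eq_one_iff.mp h1
    refine ⟨n, ?_⟩
    have hn' : ((2*Real.pi/u : ℝ) : ℂ) * Complex.I = (((n:ℝ) * (2*Real.pi) : ℝ) : ℂ) * Complex.I := by
      rw [hn]; push_cast; ring
    have hre : (2*Real.pi/u : ℝ) = (n:ℝ) * (2*Real.pi) := by
      have := mul_right_cancel₀ Complex.I_ne_zero hn'
      exact_mod_cast this
    have hπ : (2*Real.pi) ≠ 0 := by positivity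
    have hu' : u ≠ 0 := hu.ne'
    have h2 : (2*Real.pi) * (1 : ℝ) = (2*Real.pi) * ((n:ℝ)*u) := by
      have h4 := congrArg (fun r : ℝ => r * u) hre
      simp only [div_mul_cancel₀ _ hu'] at h4
      rw [mul_one]; linear_combination h4
    have h3 := mul_left_cancel₀ hπ h2
    rw [div_eq_iff hu']
    exact h3
  · exact absurd h0 hcne

end Part6
section Part7

lemma bm_cast_ind (s : Set (ℝ × ℝ)) (p : ℝ × ℝ) :
    ((s.indicator (fun _ => (1:ℝ)) p : ℝ) : ℂ) = s.indicator (fun _ => (1:ℂ)) p := by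
  by_cases hp : p ∈ s <;> simp [hp]

lemma bm_indPT {M : Type*} [MulZeroOneClass M] (a b : ℝ) (t p : ℝ × ℝ) :
    (Ioo 0 a ×ˢ Ioo 0 b).indicator (fun _ => (1:M)) (p - t)
      = (Ioo t.1 (t.1+a) ×ˢ Ioo t.2 (t.2+b)).indicator (fun _ => (1:M)) p := by
  rw [bm_indP, bm_indP, Prod.fst_sub, Prod.snd_sub, bm_indT, bm_indT]

lemma bm_rect (c₁ c₂ : ℂ) (α β γ δ : ℝ) :
    Integrable (fun p : ℝ × ℝ => Complex.exp (c₁ * p.1) * Complex.exp (c₂ * p.2)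
        * (Ioo α β ×ˢ Ioo γ δ).indicator (fun _ => (1:ℂ)) p) volume ∧
    (∫ p : ℝ × ℝ, Complex.exp (c₁ * p.1) * Complex.exp (c₂ * p.2)
        * (Ioo α β ×ˢ Ioo γ δ).indicator (fun _ => (1:ℂ)) p)
      = (∫ x : ℝ, (Ioo α β).indicator (fun x : ℝ => Complex.exp (c₁ * x)) x)
        * (∫ y : ℝ, (Ioo γ δ).indicator (fun y : ℝ => Complex.exp (c₂ * y)) y) := by
  have hfun : (fun p : ℝ × ℝ => Complex.exp (c₁ * p.1) * Complex.exp (c₂ * p.2)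
      * (Ioo α β ×ˢ Ioo γ δ).indicator (fun _ => (1:ℂ)) p)
      = fun p : ℝ × ℝ => ((Ioo α β).indicator (fun x : ℝ => Complex.exp (c₁ * x)) p.1)
        * ((Ioo γ δ).indicator (fun y : ℝ => Complex.exp (c₂ * y)) p.2) := by
    funext p
    rw [bm_indP]
    by_cases h1 : p.1 ∈ Ioo α β <;> by_cases h2 : p.2 ∈ Ioo γ δ <;>
      simp [h1, h2]
  have hc1 : Continuous (fun x : ℝ => Complex.exp (c₁ * x)) :=
    Complex.continuous_exp.comp (continuous_const.mul Complex.continuous_ofReal)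
  have hc2 : Continuous (fun y : ℝ => Complex.exp (c₂ * y)) :=
    Complex.continuous_exp.comp (continuous_const.mul Complex.continuous_ofReal)
  have hI1 : Integrable ((Ioo α β).indicator (fun x : ℝ => Complex.exp (c₁ * x))) volume := by
    refine (integrable_indicator_iff measurableSet_Ioo).2 ?_
    exact (hc1.continuousOn.integrableOn_compact isCompact_Icc).mono_set Ioo_subset_Icc_self
  have hI2 : Integrable ((Ioo γ δ).indicator (fun y : ℝ => Complex.exp (c₂ * y))) volume := by
    refine (integrable_indicator_iff measurableSet_Ioo).2 ?_
    exact (hc2.continuousOn.integrableOn_compact isCompact_Icc).mono_set Ioo_subset_Icc_self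
  constructor
  · rw [hfun, Measure.volume_eq_prod]
    exact hI1.mul_prod hI2
  · rw [hfun, Measure.volume_eq_prod]
    exact integral_prod_mul _ _

lemma bm_key (a₁ a₂ b₁ b₂ : ℝ) (ha₁ : 0 < a₁) (ha₂ : 0 < a₂)
    (hb₁ : 0 < b₁) (hb₂ : 0 < b₂) (T S : Finset (ℝ × ℝ))
    (h : ∀ᵐ x ∂(volume : Measure (ℝ × ℝ)),
        (Ioo (0:ℝ) 1 ×ˢ Ioo (0:ℝ) 1).indicator (fun _ => (1:ℝ)) x =
          (∑ t ∈ T, (Ioo 0 a₁ ×ˢ Ioo 0 a₂).indicator (fun _ => (1:ℝ)) (x - t)) +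
          (∑ s ∈ S, (Ioo 0 b₁ ×ˢ Ioo 0 b₂).indicator (fun _ => (1:ℝ)) (x - s)))
    (u v : ℝ) (hu : 0 < u) (hv : 0 < v) (hA : a₁ = u ∨ a₂ = v) (hB : b₁ = u ∨ b₂ = v) :
    (∃ m : ℤ, 1/u = (m:ℝ)) ∨ (∃ m : ℤ, 1/v = (m:ℝ)) := by
  classical
  have hae : ∀ᵐ p : ℝ × ℝ ∂(volume : Measure (ℝ × ℝ)),
      Complex.exp ((((2*Real.pi/u : ℝ) : ℂ) * Complex.I) * p.1)
        * Complex.exp ((((2*Real.pi/v : ℝ) : ℂ) * Complex.I) * p.2)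
        * (Ioo (0:ℝ) 1 ×ˢ Ioo (0:ℝ) 1).indicator (fun _ => (1:ℂ)) p
      = (∑ t ∈ T, Complex.exp ((((2*Real.pi/u : ℝ) : ℂ) * Complex.I) * p.1)
          * Complex.exp ((((2*Real.pi/v : ℝ) : ℂ) * Complex.I) * p.2)
          * (Ioo t.1 (t.1+a₁) ×ˢ Ioo t.2 (t.2+a₂)).indicator (fun _ => (1:ℂ)) p)
        + (∑ s ∈ S, Complex.exp ((((2*Real.pi/u : ℝ) : ℂ) * Complex.I) * p.1)
          * Complex.exp ((((2*Real.pi/v : ℝ) : ℂ) * Complex.I) * p.2)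
          * (Ioo s.1 (s.1+b₁) ×ˢ Ioo s.2 (s.2+b₂)).indicator (fun _ => (1:ℂ)) p) := by
    filter_upwards [h] with p e
    have e' := congrArg (fun r : ℝ => (r : ℂ)) e
    simp only [Complex.ofReal_add, Complex.ofReal_sum, bm_cast_ind] at e'
    rw [mul_assoc, e', mul_add, Finset.mul_sum, Finset.mul_sum]
    simp only [bm_indPT, mul_assoc]
    rw [mul_add, Finset.mul_sum, Finset.mul_sum]
  have hint := integral_congr_ae hae
  rw [(bm_rect _ _ 0 1 0 1).2] at hint
  rw [integral_add
      (integrable_finset_sum T (fun t _ => (bm_rect _ _ t.1 (t.1+a₁) t.2 (t.2+a₂)).1))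
      (integrable_finset_sum S (fun s _ => (bm_rect _ _ s.1 (s.1+b₁) s.2 (s.2+b₂)).1)),
      integral_finset_sum T (fun t _ => (bm_rect _ _ t.1 (t.1+a₁) t.2 (t.2+a₂)).1),
      integral_finset_sum S (fun s _ => (bm_rect _ _ s.1 (s.1+b₁) s.2 (s.2+b₂)).1)] at hint
  have hTzero : ∀ t ∈ T, (∫ p : ℝ × ℝ,
      Complex.exp ((((2*Real.pi/u : ℝ) : ℂ) * Complex.I) * p.1)
        * Complex.exp ((((2*Real.pi/v : ℝ) : ℂ) * Complex.I) * p.2)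
        * (Ioo t.1 (t.1+a₁) ×ˢ Ioo t.2 (t.2+a₂)).indicator (fun _ => (1:ℂ)) p) = 0 := by
    intro t _
    rw [(bm_rect _ _ t.1 (t.1+a₁) t.2 (t.2+a₂)).2]
    rcases hA with rfl | rfl
    · rw [bm_E0 a₁ ha₁ t.1, zero_mul]
    · rw [bm_E0 a₂ ha₂ t.2, mul_zero]
  have hSzero : ∀ s ∈ S, (∫ p : ℝ × ℝ,
      Complex.exp ((((2*Real.pi/u : ℝ) : ℂ) * Complex.I) * p.1)
        * Complex.exp ((((2*Real.pi/v : ℝ) : ℂ) * Complex.I) * p.2)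
        * (Ioo s.1 (s.1+b₁) ×ˢ Ioo s.2 (s.2+b₂)).indicator (fun _ => (1:ℂ)) p) = 0 := by
    intro s _
    rw [(bm_rect _ _ s.1 (s.1+b₁) s.2 (s.2+b₂)).2]
    rcases hB with rfl | rfl
    · rw [bm_E0 b₁ hb₁ s.1, zero_mul]
    · rw [bm_E0 b₂ hb₂ s.2, mul_zero]
  rw [Finset.sum_eq_zero hTzero, Finset.sum_eq_zero hSzero, add_zero] at hint
  rcases mul_eq_zero.mp hint with h0 | h0
  · exact Or.inl (bm_extract u hu h0)
  · exact Or.inr (bm_extract v hv h0)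

end Part7

/-- Bower–Michael theorem: the unit square `Q = (0,1)²` can be tiled by
translates of the two bricks `A = (0,a₁)×(0,a₂)` and `B = (0,b₁)×(0,b₂)` iff
`Q` can be cut by a horizontal or vertical line into two rectangles, each
tiled by translates of bricks of a single type. -/
theorem stmt_11 (a₁ a₂ b₁ b₂ : ℝ) (ha₁ : 0 < a₁) (ha₂ : 0 < a₂)
    (hb₁ : 0 < b₁) (hb₂ : 0 < b₂) :
    (∃ T S : Finset (ℝ × ℝ),
      ∀ᵐ x ∂(volume : Measure (ℝ × ℝ)),
        (Ioo (0:ℝ) 1 ×ˢ Ioo (0:ℝ) 1).indicator (fun _ => (1:ℝ)) x =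
          (∑ t ∈ T, (Ioo 0 a₁ ×ˢ Ioo 0 a₂).indicator (fun _ => (1:ℝ)) (x - t)) +
          (∑ s ∈ S, (Ioo 0 b₁ ×ˢ Ioo 0 b₂).indicator (fun _ => (1:ℝ)) (x - s))) ↔
    (((∃ m : ℤ, 1 / a₁ = (m : ℝ)) ∧ (∃ m : ℤ, 1 / a₂ = (m : ℝ))) ∨
     ((∃ m : ℤ, 1 / b₁ = (m : ℝ)) ∧ (∃ m : ℤ, 1 / b₂ = (m : ℝ))) ∨
     ((∃ m : ℤ, 1 / a₁ = (m : ℝ)) ∧ (∃ m : ℤ, 1 / b₁ = (m : ℝ)) ∧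
       ∃ k l : ℕ, (k : ℝ) * a₂ + (l : ℝ) * b₂ = 1) ∨
     ((∃ m : ℤ, 1 / a₂ = (m : ℝ)) ∧ (∃ m : ℤ, 1 / b₂ = (m : ℝ)) ∧
       ∃ k l : ℕ, (k : ℝ) * a₁ + (l : ℝ) * b₁ = 1)) := by
  constructor
  · rintro ⟨T, S, h⟩
    have key1 := bm_key a₁ a₂ b₁ b₂ ha₁ ha₂ hb₁ hb₂ T S h a₁ b₂ ha₁ hb₂
      (Or.inl rfl) (Or.inr rfl)
    have key2 := bm_key a₁ a₂ b₁ b₂ ha₁ ha₂ hb₁ hb₂ T S h b₁ a₂ hb₁ ha₂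
      (Or.inr rfl) (Or.inl rfl)
    have sl2 := bm_slice a₁ a₂ b₁ b₂ ha₁ ha₂ hb₁ hb₂ T S h
    have sl1 : ∃ k l : ℕ, (k:ℝ) * a₁ + (l:ℝ) * b₁ = 1 := by
      obtain ⟨T', S', h'⟩ := bm_swap a₁ a₂ b₁ b₂ T S h
      exact bm_slice a₂ a₁ b₂ b₁ ha₂ ha₁ hb₂ hb₁ T' S' h'
    rcases key1 with hA1 | hB2 <;> rcases key2 with hB1 | hA2
    · exact Or.inr (Or.inr (Or.inl ⟨hA1, hB1, sl2⟩))
    · exact Or.inl ⟨hA1, hA2⟩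
    · exact Or.inr (Or.inl ⟨hB1, hB2⟩)
    · exact Or.inr (Or.inr (Or.inr ⟨hA2, hB2, sl1⟩))
  · exact bm_backward a₁ a₂ b₁ b₂ ha₁ ha₂ hb₁ hb₂
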